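/- Let A be a finite subset of an abelian group, s ≥ 4 an integer, and suppose T_s(A) ≥ C·10^s s^{2s} |A|^s for a suitable absolute constant C. Then the number T*_s(A) of nontrivial additive 2s-tuples satisfies T*_s(A) ≥ (1/2) T_s(A). -/

import Mathlib

open Finset

def Tk {G : Type*} [AddCommGroup G] [DecidableEq G] (k : ℕ) (A : Finset G) : ℕ :=
  (((Fintype.piFinset fun _ : Fin k => A) ×ˢ Fintype.piFinset fun _ : Fin k => A).filter
    fun p => ∑ i, p.1 i = ∑ i, p.2 i).card

/-- `TkStar s A`: the number of nontrivial additive `2s`-tuples, i.e. solutions of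
`x_1 + ⋯ + x_s = x_{s+1} + ⋯ + x_{2s}` with all `2s` coordinates pairwise distinct. -/
def TkStar {G : Type*} [AddCommGroup G] [DecidableEq G] (s : ℕ) (A : Finset G) : ℕ :=
  (((Fintype.piFinset fun _ : Fin s => A) ×ˢ Fintype.piFinset fun _ : Fin s => A).filter
    fun p => (∑ i, p.1 i = ∑ i, p.2 i) ∧
      ∀ i j : Fin s ⊕ Fin s, Sum.elim p.1 p.2 i = Sum.elim p.1 p.2 j → i = j).card


namespace Stmt14
set_option linter.unusedSectionVars false
set_option maxHeartbeats 1000000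

lemma chain_ineq (t : ℕ → ℝ) (m : ℕ) (hpos : ∀ k, k ≤ m + 4 → 0 < t k)
    (hconv : ∀ k, k + 2 ≤ m + 4 → t (k+1) ^ 2 ≤ t k * t (k+2)) :
    t (m+2) ^ (m+3) ≤ t 1 ^ 2 * t (m+4) ^ (m+1) := by
  set b : ℕ → ℝ := fun k => Real.log (t k) with hb
  set D : ℕ → ℝ := fun k => b (k+1) - b k with hD
  have hstep : ∀ k, k + 2 ≤ m + 4 → D k ≤ D (k+1) := by
    intro k hk
    have h1 : 0 < t (k+1) ^ 2 := pow_pos (hpos _ (by omega)) 2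
    have h2 := Real.log_le_log h1 (hconv k hk)
    rw [Real.log_pow, Real.log_mul (ne_of_gt (hpos _ (by omega))) (ne_of_gt (hpos _ (by omega)))]
      at h2
    simp only [hD, hb]
    push_cast at h2
    linarith
  have hmono : ∀ k l, k ≤ l → l ≤ m + 3 → D k ≤ D l := by
    intro k l hkl
    induction l, hkl using Nat.le_induction with
    | base => intro _; exact le_rfl
    | succ n hn ih =>
      intro hl
      have h1 := hstep n (by omega)
      have h2 := ih (by omega)
      linarith
  have htel : b (m+2) - b 1 = ∑ i ∈ Finset.range (m+1), D (i+1) := by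
    have := Finset.sum_range_sub (fun i => b (i+1)) (m+1)
    simpa [hD] using this.symm
  have hbound1 : ∑ i ∈ Finset.range (m+1), D (i+1) ≤ (m+1 : ℝ) * D (m+2) := by
    calc ∑ i ∈ Finset.range (m+1), D (i+1) ≤ ∑ i ∈ Finset.range (m+1), D (m+2) :=
          Finset.sum_le_sum fun i hi => hmono (i+1) (m+2) (by
            simp only [Finset.mem_range] at hi; omega) (by omega)
      _ = (m+1 : ℝ) * D (m+2) := by rw [Finset.sum_const, Finset.card_range]; push_cast; ring
  have hbound2 : ∑ i ∈ Finset.range (m+1), D (i+1) ≤ (m+1 : ℝ) * D (m+3) := by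
    calc ∑ i ∈ Finset.range (m+1), D (i+1) ≤ ∑ i ∈ Finset.range (m+1), D (m+3) :=
          Finset.sum_le_sum fun i hi => hmono (i+1) (m+3) (by
            simp only [Finset.mem_range] at hi; omega) (by omega)
      _ = (m+1 : ℝ) * D (m+3) := by rw [Finset.sum_const, Finset.card_range]; push_cast; ring
  have hkey : ((m:ℝ)+3) * b (m+2) ≤ 2 * b 1 + ((m:ℝ)+1) * b (m+4) := by
    have hDsum : D (m+2) + D (m+3) = b (m+4) - b (m+2) := by simp only [hD]; ring_nf
    have h2t : 2 * (b (m+2) - b 1) ≤ ((m:ℝ)+1) * (b (m+4) - b (m+2)) := by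
      rw [← hDsum]
      have := htel
      nlinarith [hbound1, hbound2]
    linarith
  have hexp : ∀ k n : ℕ, k ≤ m + 4 → t k ^ n = Real.exp ((n : ℝ) * b k) := by
    intro k n hk
    rw [Real.exp_nat_mul, hb]
    simp only []
    rw [Real.exp_log (hpos k hk)]
  rw [hexp (m+2) (m+3) (by omega), hexp 1 2 (by omega), hexp (m+4) (m+1) (by omega),
    ← Real.exp_add]
  rw [Real.exp_le_exp]
  push_cast
  linarith


variable {G : Type*} [AddCommGroup G] [DecidableEq G] (A : Finset G)

def pis (k : ℕ) (A : Finset G) : Finset (Fin k → G) := Fintype.piFinset fun _ => A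

def rA (k : ℕ) (A : Finset G) (c : G) : ℕ := ((pis k A).filter fun x => ∑ i, x i = c).card

def SA (k : ℕ) (A : Finset G) : Finset G := (pis k A).image fun x => ∑ i, x i

lemma mem_SA_of_rA_ne {k : ℕ} {c : G} (h : rA k A c ≠ 0) : c ∈ SA k A := by
  rw [rA] at h
  obtain ⟨x, hx⟩ := Finset.card_pos.1 (Nat.pos_of_ne_zero h)
  rw [Finset.mem_filter] at hx
  exact Finset.mem_image.2 ⟨x, hx.1, hx.2⟩

lemma add_mem_SA {k : ℕ} {d a : G} (hd : d ∈ SA k A) (ha : a ∈ A) :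
    d + a ∈ SA (k+1) A := by
  obtain ⟨x, hx, rfl⟩ := Finset.mem_image.1 hd
  refine Finset.mem_image.2 ⟨Fin.snoc x a, ?_, ?_⟩
  · rw [pis, Fintype.mem_piFinset] at hx ⊢
    intro i
    refine Fin.lastCases ?_ (fun j => ?_) i
    · simpa using ha
    · simpa using hx j
  · simp [Fin.sum_univ_castSucc]

lemma sum_le_sum_support {f : G → ℝ} (hf : ∀ x, 0 ≤ f x) {S : Finset G}
    (hs : ∀ x, f x ≠ 0 → x ∈ S) (X : Finset G) : ∑ x ∈ X, f x ≤ ∑ x ∈ S, f x := by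
  calc ∑ x ∈ X, f x = ∑ x ∈ X ∩ S, f x := by
        refine (Finset.sum_subset Finset.inter_subset_left (fun x hx hnx => ?_)).symm
        by_contra h
        exact hnx (Finset.mem_inter.2 ⟨hx, hs x h⟩)
    _ ≤ ∑ x ∈ S, f x :=
        Finset.sum_le_sum_of_subset_of_nonneg Finset.inter_subset_right (fun x _ _ => hf x)

lemma shift_sum_le {F : G → ℝ} (hF : ∀ x, 0 ≤ F x) {S : Finset G}
    (hs : ∀ x, F x ≠ 0 → x ∈ S) (X : Finset G) (a : G) :
    ∑ d ∈ X, F (d + a) ≤ ∑ c ∈ S, F c := by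
  have h1 : ∑ d ∈ X, F (d + a) = ∑ c ∈ X.map (Equiv.addRight a).toEmbedding, F c :=
    (Finset.sum_map X (Equiv.addRight a).toEmbedding F).symm
  rw [h1]
  exact sum_le_sum_support hF hs _


def NS (k l : ℕ) (A : Finset G) (c : G) : Finset ((Fin k → G) × (Fin l → G)) :=
  ((pis k A) ×ˢ (pis l A)).filter fun q => c + ∑ i, q.1 i = ∑ i, q.2 i

lemma NS_card (k l : ℕ) (c : G) :
    (NS k l A c).card = ∑ d ∈ SA k A, rA k A d * rA l A (c + d) := by
  rw [NS, Finset.card_eq_sum_card_fiberwise (f := fun q => ∑ i, q.1 i) (t := SA k A) ?_]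
  · refine Finset.sum_congr rfl fun d _ => ?_
    have : (((pis k A) ×ˢ (pis l A)).filter fun q => c + ∑ i, q.1 i = ∑ i, q.2 i).filter
        (fun q => ∑ i, q.1 i = d)
        = ((pis k A).filter fun x => ∑ i, x i = d) ×ˢ ((pis l A).filter fun y => ∑ i, y i = c + d) := by
      ext q
      simp only [Finset.mem_filter, Finset.mem_product]
      constructor
      · rintro ⟨⟨⟨h1, h2⟩, h3⟩, h4⟩
        exact ⟨⟨h1, h4⟩, h2, by rw [← h3, h4]⟩
      · rintro ⟨⟨h1, h4⟩, h2, h3⟩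
        exact ⟨⟨⟨h1, h2⟩, by rw [h4, h3]⟩, h4⟩
    rw [this, Finset.card_product, rA, rA]
  · intro q hq
    rw [Finset.mem_coe, Finset.mem_filter, Finset.mem_product] at hq
    exact Finset.mem_image.2 ⟨q.1, hq.1.1, rfl⟩

lemma Tk_eq_NS (k : ℕ) : Tk k A = (NS k k A 0).card := by
  rw [Tk, NS]
  congr 1
  refine Finset.filter_congr fun q _ => ?_
  simp [pis]

lemma Tk_eq (k : ℕ) : Tk k A = ∑ d ∈ SA k A, rA k A d * rA k A d := by
  rw [Tk_eq_NS, NS_card]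
  exact Finset.sum_congr rfl fun d _ => by rw [zero_add]

lemma rA_succ (k : ℕ) (c : G) : rA (k+1) A c = ∑ a ∈ A, rA k A (c - a) := by
  rw [rA, Finset.card_eq_sum_card_fiberwise (f := fun x => x (Fin.last k)) (t := A) ?_]
  · refine Finset.sum_congr rfl fun a ha => ?_
    rw [rA]
    refine Finset.card_bij' (fun x _ => Fin.init x) (fun y _ => Fin.snoc y a) ?_ ?_ ?_ ?_
    · intro x hx
      simp only [Finset.mem_filter, Fintype.mem_piFinset, pis] at hx ⊢
      obtain ⟨⟨h1, h2⟩, h3⟩ := hx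
      refine ⟨fun i => h1 i.castSucc, ?_⟩
      rw [Fin.sum_univ_castSucc] at h2
      rw [← h3]
      have : ∑ i : Fin k, Fin.init x i = ∑ i : Fin k, x i.castSucc := rfl
      rw [this]
      exact eq_sub_of_add_eq h2
    · intro y hy
      simp only [Finset.mem_filter, Fintype.mem_piFinset, pis] at hy ⊢
      obtain ⟨h1, h2⟩ := hy
      refine ⟨⟨fun i => ?_, ?_⟩, by simp⟩
      · refine Fin.lastCases ?_ (fun j => ?_) i
        · simpa using ha
        · simpa using h1 j
      · rw [Fin.sum_univ_castSucc]
        simp only [Fin.snoc_castSucc, Fin.snoc_last]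
        rw [h2]
        abel
    · intro x hx
      simp only [Finset.mem_filter] at hx
      show Fin.snoc (Fin.init x) a = x
      conv_lhs => rw [← hx.2]
      exact Fin.snoc_init_self x
    · intro y _
      exact Fin.init_snoc (α := fun _ : Fin (k+1) => G) a y
  · intro x hx
    rw [Finset.mem_coe, Finset.mem_filter, pis, Fintype.mem_piFinset] at hx
    exact hx.1 _


-- real cast of rA
local notation "rr" => fun (m : ℕ) (c : G) => ((rA m A c : ℝ))

lemma rr_nonneg (m : ℕ) (c : G) : (0:ℝ) ≤ (rA m A c : ℝ) := Nat.cast_nonneg _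

lemma Tk_eq_real (k : ℕ) : (Tk k A : ℝ) = ∑ d ∈ SA k A, (rA k A d : ℝ) ^ 2 := by
  rw [Tk_eq]
  push_cast
  exact Finset.sum_congr rfl fun d _ => (sq ((rA k A d : ℝ))).symm

lemma sq_shift_le (l : ℕ) (X : Finset G) (c : G) :
    ∑ d ∈ X, (rA l A (d + c) : ℝ) ^ 2 ≤ (Tk l A : ℝ) := by
  rw [Tk_eq_real]
  refine shift_sum_le (F := fun e => (rA l A e : ℝ)^2) (fun x => sq_nonneg _) ?_ X c
  intro x hx
  refine mem_SA_of_rA_ne A fun h => hx ?_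
  simp [h]

lemma NS_le (k l : ℕ) (c : G) :
    ((NS k l A c).card : ℝ) ≤ Real.sqrt ((Tk k A : ℝ) * (Tk l A : ℝ)) := by
  have h0 : ((NS k l A c).card : ℝ) = ∑ d ∈ SA k A, (rA k A d : ℝ) * (rA l A (c + d) : ℝ) := by
    rw [NS_card]; push_cast; ring_nf
  rw [h0]
  have hcs := Finset.sum_mul_sq_le_sq_mul_sq (SA k A) (fun d => (rA k A d : ℝ))
      (fun d => (rA l A (c + d) : ℝ))
  have h1 : ∑ d ∈ SA k A, (rA k A d : ℝ) ^ 2 = (Tk k A : ℝ) := (Tk_eq_real A k).symm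
  have h2 : ∑ d ∈ SA k A, (rA l A (c + d) : ℝ) ^ 2 ≤ (Tk l A : ℝ) := by
    have := sq_shift_le A l (SA k A) c
    refine le_trans (le_of_eq ?_) this
    exact Finset.sum_congr rfl fun d _ => by rw [add_comm]
  have hnn : (0:ℝ) ≤ ∑ d ∈ SA k A, (rA k A d : ℝ) * (rA l A (c + d) : ℝ) :=
    Finset.sum_nonneg fun d _ => mul_nonneg (Nat.cast_nonneg _) (Nat.cast_nonneg _)
  refine (Real.le_sqrt hnn (by positivity)).2 ?_
  calc (∑ d ∈ SA k A, (rA k A d : ℝ) * (rA l A (c + d) : ℝ))^2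
      ≤ (∑ d ∈ SA k A, (rA k A d : ℝ)^2) * ∑ d ∈ SA k A, (rA l A (c + d) : ℝ)^2 := hcs
    _ ≤ (Tk k A : ℝ) * (Tk l A : ℝ) := by
        rw [h1]
        exact mul_le_mul_of_nonneg_left h2 (Nat.cast_nonneg _)

lemma logconv (k : ℕ) : (Tk (k+1) A : ℝ)^2 ≤ (Tk k A : ℝ) * (Tk (k+2) A : ℝ) := by
  set h : G → ℝ := fun d => ∑ a ∈ A, (rA (k+1) A (d + a) : ℝ) with hh
  have hnn : ∀ d, 0 ≤ h d := fun d => Finset.sum_nonneg fun a _ => Nat.cast_nonneg _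
  -- Step 1 : T_{k+1} ≤ ∑_{d ∈ SA k} rA k d * h d
  have step1 : (Tk (k+1) A : ℝ) ≤ ∑ d ∈ SA k A, (rA k A d : ℝ) * h d := by
    have e1 : (Tk (k+1) A : ℝ)
        = ∑ a ∈ A, ∑ c ∈ SA (k+1) A, (rA k A (c - a) : ℝ) * (rA (k+1) A c : ℝ) := by
      rw [Tk_eq_real]
      rw [Finset.sum_comm]
      refine Finset.sum_congr rfl fun c _ => ?_
      rw [sq, rA_succ A k c]
      push_cast
      rw [Finset.sum_mul]
    rw [e1]
    have e2 : ∑ d ∈ SA k A, (rA k A d : ℝ) * h d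
        = ∑ a ∈ A, ∑ d ∈ SA k A, (rA k A d : ℝ) * (rA (k+1) A (d + a) : ℝ) := by
      rw [Finset.sum_comm]
      refine Finset.sum_congr rfl fun d _ => ?_
      rw [hh, Finset.mul_sum]
    rw [e2]
    refine Finset.sum_le_sum fun a _ => ?_
    have key : ∀ c : G, (rA k A (c - a) : ℝ) * (rA (k+1) A c : ℝ)
        = (fun d => (rA k A d : ℝ) * (rA (k+1) A (d + a) : ℝ)) (c + (-a)) := by
      intro c
      simp only [sub_eq_add_neg, neg_add_cancel_right]
    calc ∑ c ∈ SA (k+1) A, (rA k A (c - a) : ℝ) * (rA (k+1) A c : ℝ)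
        = ∑ c ∈ SA (k+1) A,
            (fun d => (rA k A d : ℝ) * (rA (k+1) A (d + a) : ℝ)) (c + (-a)) :=
          Finset.sum_congr rfl fun c _ => key c
      _ ≤ ∑ d ∈ SA k A, (rA k A d : ℝ) * (rA (k+1) A (d + a) : ℝ) := by
          refine shift_sum_le (F := fun d => (rA k A d : ℝ) * (rA (k+1) A (d + a) : ℝ))
            ?_ ?_ (SA (k+1) A) (-a)
          · intro x; exact mul_nonneg (Nat.cast_nonneg _) (Nat.cast_nonneg _)
          · intro x hx
            refine mem_SA_of_rA_ne A fun hz => hx ?_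
            simp [hz]
  -- Step 2: Cauchy–Schwarz
  have step2 : (∑ d ∈ SA k A, (rA k A d : ℝ) * h d)^2
      ≤ (Tk k A : ℝ) * ∑ d ∈ SA k A, (h d)^2 := by
    have := Finset.sum_mul_sq_le_sq_mul_sq (SA k A) (fun d => (rA k A d : ℝ)) h
    rwa [← Tk_eq_real] at this
  -- Step 3: ∑ h² ≤ T_{k+2}
  have step3 : ∑ d ∈ SA k A, (h d)^2 ≤ (Tk (k+2) A : ℝ) := by
    have e3 : ∑ d ∈ SA k A, (h d)^2
        = ∑ a ∈ A, ∑ b ∈ A, ∑ d ∈ SA k A,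
            (rA (k+1) A (d + a) : ℝ) * (rA (k+1) A (d + b) : ℝ) := by
      have hd2 : ∀ d : G, (h d)^2
          = ∑ a ∈ A, ∑ b ∈ A, (rA (k+1) A (d + a) : ℝ) * (rA (k+1) A (d + b) : ℝ) := by
        intro d
        rw [sq, hh]
        exact Finset.sum_mul_sum A A _ _
      rw [Finset.sum_congr rfl fun d _ => hd2 d, Finset.sum_comm]
      exact Finset.sum_congr rfl fun a _ => Finset.sum_comm
    have e4 : (Tk (k+2) A : ℝ)
        = ∑ a ∈ A, ∑ b ∈ A, ∑ c ∈ SA (k+2) A,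
            (rA (k+1) A (c - a) : ℝ) * (rA (k+1) A (c - b) : ℝ) := by
      rw [Tk_eq_real]
      have hc2 : ∀ c : G, ((rA (k+2) A c : ℝ))^2
          = ∑ a ∈ A, ∑ b ∈ A, (rA (k+1) A (c - a) : ℝ) * (rA (k+1) A (c - b) : ℝ) := by
        intro c
        rw [sq, rA_succ A (k+1) c]
        push_cast
        exact Finset.sum_mul_sum A A _ _
      rw [Finset.sum_congr rfl fun c _ => hc2 c, Finset.sum_comm]
      exact Finset.sum_congr rfl fun a _ => Finset.sum_comm
    rw [e3, e4]
    refine Finset.sum_le_sum fun a _ => Finset.sum_le_sum fun b _ => ?_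
    have key : ∀ d : G, (rA (k+1) A (d + a) : ℝ) * (rA (k+1) A (d + b) : ℝ)
        = (fun c => (rA (k+1) A (c - b) : ℝ) * (rA (k+1) A (c - a) : ℝ)) (d + (a + b)) := by
      intro d
      simp only []
      have h1 : d + (a + b) - b = d + a := by abel
      have h2 : d + (a + b) - a = d + b := by abel
      rw [h1, h2]
    calc ∑ d ∈ SA k A, (rA (k+1) A (d + a) : ℝ) * (rA (k+1) A (d + b) : ℝ)
        = ∑ d ∈ SA k A,
            (fun c => (rA (k+1) A (c - b) : ℝ) * (rA (k+1) A (c - a) : ℝ)) (d + (a + b)) :=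
          Finset.sum_congr rfl fun d _ => key d
      _ ≤ ∑ c ∈ SA (k+2) A, (rA (k+1) A (c - b) : ℝ) * (rA (k+1) A (c - a) : ℝ) := by
          refine shift_sum_le
            (F := fun c => (rA (k+1) A (c - b) : ℝ) * (rA (k+1) A (c - a) : ℝ)) ?_ ?_ _ _
          · intro x; exact mul_nonneg (Nat.cast_nonneg _) (Nat.cast_nonneg _)
          · intro x hx
            have hxa : rA (k+1) A (x - a) ≠ 0 := by
              intro hz
              exact hx (by simp [hz])
            have h3 : x - a + a ∈ SA (k+2) A := add_mem_SA A (mem_SA_of_rA_ne A hxa) ‹a ∈ A›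
            simpa using h3
      _ = ∑ c ∈ SA (k+2) A, (rA (k+1) A (c - a) : ℝ) * (rA (k+1) A (c - b) : ℝ) :=
          Finset.sum_congr rfl fun c _ => mul_comm _ _
  calc (Tk (k+1) A : ℝ)^2 ≤ (∑ d ∈ SA k A, (rA k A d : ℝ) * h d)^2 := by
        exact pow_le_pow_left₀ (Nat.cast_nonneg _) step1 2
    _ ≤ (Tk k A : ℝ) * ∑ d ∈ SA k A, (h d)^2 := step2
    _ ≤ (Tk k A : ℝ) * (Tk (k+2) A : ℝ) :=
        mul_le_mul_of_nonneg_left step3 (Nat.cast_nonneg _)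



lemma remove_mem_pis {n : ℕ} {f : Fin (n+1) → G} (hf : f ∈ pis (n+1) A) (p : Fin (n+1)) :
    p.removeNth f ∈ pis n A := by
  rw [pis, Fintype.mem_piFinset] at hf ⊢
  intro i
  exact hf _

lemma sum_remove {n : ℕ} (f : Fin (n+1) → G) (p : Fin (n+1)) :
    ∑ i, f i = f p + ∑ i, p.removeNth f i :=
  Fin.sum_univ_succAbove f p

lemma reconstruct {n : ℕ} (f : Fin (n+2) → G) (j' : Fin (n+2)) (i'' : Fin (n+1)) :
    f = j'.insertNth (f j')
      (i''.insertNth ((j'.removeNth f) i'') (i''.removeNth (j'.removeNth f))) := by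
  rw [Fin.insertNth_self_removeNth, Fin.insertNth_self_removeNth]

/-- Case "both coordinates on the same side": the fiber where two distinct left
coordinates equal `a` injects into `NS (m+2) (m+4) A (a+a)`. -/
lemma case_same (m : ℕ) (a : G) (i' j' : Fin (m+4)) (hne : i' ≠ j')
    (F : Finset ((Fin (m+4) → G) × (Fin (m+4) → G)))
    (hF : ∀ p ∈ F, p.1 ∈ pis (m+4) A ∧ p.2 ∈ pis (m+4) A ∧
      (∑ i, p.1 i = ∑ i, p.2 i) ∧ p.1 i' = p.1 j' ∧ p.1 i' = a) :
    F.card ≤ (NS (m+2) (m+4) A (a+a)).card := by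
  obtain ⟨i'', hi''⟩ := Fin.exists_succAbove_eq hne
  refine Finset.card_le_card_of_injOn
    (fun p => (i''.removeNth (j'.removeNth p.1), p.2)) ?_ ?_
  · intro p hp
    obtain ⟨h1, h2, h3, h4, h5⟩ := hF p hp
    rw [NS, Finset.mem_coe, Finset.mem_filter, Finset.mem_product]
    refine ⟨⟨remove_mem_pis A (remove_mem_pis A h1 j') i'', h2⟩, ?_⟩
    have e1 : ∑ i, p.1 i = p.1 j' + ∑ i, j'.removeNth p.1 i := sum_remove p.1 j'
    have e2 : ∑ i, j'.removeNth p.1 i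
        = (j'.removeNth p.1) i'' + ∑ i, i''.removeNth (j'.removeNth p.1) i :=
      sum_remove (j'.removeNth p.1) i''
    have e3 : (j'.removeNth p.1) i'' = a := by
      show p.1 (j'.succAbove i'') = a
      rw [hi'']
      exact h5
    have e4 : p.1 j' = a := by rw [← h4, h5]
    rw [← h3, e1, e2, e3, e4]
    abel
  · intro p hp q hq heq
    obtain ⟨hp1, -, -, hp4, hp5⟩ := hF p hp
    obtain ⟨hq1, -, -, hq4, hq5⟩ := hF q hq
    simp only [Prod.mk.injEq] at heq
    have e3p : (j'.removeNth p.1) i'' = a := by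
      show p.1 (j'.succAbove i'') = a; rw [hi'']; exact hp5
    have e3q : (j'.removeNth q.1) i'' = a := by
      show q.1 (j'.succAbove i'') = a; rw [hi'']; exact hq5
    have e4p : p.1 j' = a := by rw [← hp4, hp5]
    have e4q : q.1 j' = a := by rw [← hq4, hq5]
    have hrec1 := reconstruct p.1 j' i''
    have hrec2 := reconstruct q.1 j' i''
    rw [e3p, e4p, heq.1] at hrec1
    rw [e3q, e4q] at hrec2
    exact Prod.ext (hrec1.trans hrec2.symm) heq.2

/-- Case "coordinates on opposite sides". -/
lemma case_mixed (m : ℕ) (a : G) (i' j'' : Fin (m+4))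
    (F : Finset ((Fin (m+4) → G) × (Fin (m+4) → G)))
    (hF : ∀ p ∈ F, p.1 ∈ pis (m+4) A ∧ p.2 ∈ pis (m+4) A ∧
      (∑ i, p.1 i = ∑ i, p.2 i) ∧ p.1 i' = p.2 j'' ∧ p.1 i' = a) :
    F.card ≤ (NS (m+3) (m+3) A 0).card := by
  refine Finset.card_le_card_of_injOn
    (fun p => (i'.removeNth p.1, j''.removeNth p.2)) ?_ ?_
  · intro p hp
    obtain ⟨h1, h2, h3, h4, h5⟩ := hF p hp
    rw [NS, Finset.mem_coe, Finset.mem_filter, Finset.mem_product]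
    refine ⟨⟨remove_mem_pis A h1 i', remove_mem_pis A h2 j''⟩, ?_⟩
    have e1 : ∑ i, p.1 i = p.1 i' + ∑ i, i'.removeNth p.1 i := sum_remove p.1 i'
    have e2 : ∑ i, p.2 i = p.2 j'' + ∑ i, j''.removeNth p.2 i := sum_remove p.2 j''
    rw [e1, e2, h5, ← h4, h5] at h3
    rw [zero_add]
    exact add_left_cancel h3
  · intro p hp q hq heq
    obtain ⟨hp1, -, -, hp4, hp5⟩ := hF p hp
    obtain ⟨hq1, -, -, hq4, hq5⟩ := hF q hq
    simp only [Prod.mk.injEq] at heq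
    have r1p : p.1 = i'.insertNth a (i'.removeNth p.1) := by
      conv_lhs => rw [← Fin.insertNth_self_removeNth i' p.1]
      rw [hp5]
    have r1q : q.1 = i'.insertNth a (i'.removeNth q.1) := by
      conv_lhs => rw [← Fin.insertNth_self_removeNth i' q.1]
      rw [hq5]
    have r2p : p.2 = j''.insertNth a (j''.removeNth p.2) := by
      conv_lhs => rw [← Fin.insertNth_self_removeNth j'' p.2]
      rw [← hp4, hp5]
    have r2q : q.2 = j''.insertNth a (j''.removeNth q.2) := by
      conv_lhs => rw [← Fin.insertNth_self_removeNth j'' q.2]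
      rw [← hq4, hq5]
    refine Prod.ext ?_ ?_
    · rw [r1p, r1q, heq.1]
    · rw [r2p, r2q, heq.2]


lemma case_same2 (m : ℕ) (a : G) (i' j' : Fin (m+4)) (hne : i' ≠ j')
    (F : Finset ((Fin (m+4) → G) × (Fin (m+4) → G)))
    (hF : ∀ p ∈ F, p.1 ∈ pis (m+4) A ∧ p.2 ∈ pis (m+4) A ∧
      (∑ i, p.1 i = ∑ i, p.2 i) ∧ p.2 i' = p.2 j' ∧ p.2 i' = a) :
    F.card ≤ (NS (m+2) (m+4) A (a+a)).card := by
  have himg : (F.image Prod.swap).card = F.card :=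
    Finset.card_image_of_injective F Prod.swap_injective
  rw [← himg]
  refine case_same A m a i' j' hne _ ?_
  intro p hp
  obtain ⟨q, hq, rfl⟩ := Finset.mem_image.1 hp
  obtain ⟨h1, h2, h3, h4, h5⟩ := hF q hq
  exact ⟨h2, h1, h3.symm, h4, h5⟩

lemma NS_sqrt_same (m : ℕ) (c : G) : ((NS (m+2) (m+4) A c).card : ℝ)
    ≤ Real.sqrt ((Tk (m+2) A : ℝ) * (Tk (m+4) A : ℝ)) := NS_le A _ _ _

lemma NS_sqrt_mixed (m : ℕ) : ((NS (m+3) (m+3) A 0).card : ℝ)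
    ≤ Real.sqrt ((Tk (m+2) A : ℝ) * (Tk (m+4) A : ℝ)) := by
  refine le_trans (NS_le A _ _ _) ?_
  have h1 : Real.sqrt ((Tk (m+3) A : ℝ) * (Tk (m+3) A : ℝ)) = (Tk (m+3) A : ℝ) :=
    Real.sqrt_mul_self (Nat.cast_nonneg _)
  rw [h1]
  refine (Real.le_sqrt (Nat.cast_nonneg _) (by positivity)).2 ?_
  exact logconv A (m+2)

lemma Bd_le (m : ℕ) (i j : Fin (m+4) ⊕ Fin (m+4)) (hij : i ≠ j) :
    ((((pis (m+4) A) ×ˢ (pis (m+4) A)).filter fun p =>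
      (∑ t, p.1 t = ∑ t, p.2 t) ∧ Sum.elim p.1 p.2 i = Sum.elim p.1 p.2 j).card : ℝ)
    ≤ A.card * Real.sqrt ((Tk (m+2) A : ℝ) * (Tk (m+4) A : ℝ)) := by
  have hmem : ∀ p ∈ ((pis (m+4) A) ×ˢ (pis (m+4) A)).filter fun p =>
      (∑ t, p.1 t = ∑ t, p.2 t) ∧ Sum.elim p.1 p.2 i = Sum.elim p.1 p.2 j,
      Sum.elim p.1 p.2 i ∈ A := by
    intro p hp
    simp only [Finset.mem_filter, Finset.mem_product, pis, Fintype.mem_piFinset] at hp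
    cases i with
    | inl i' => exact hp.1.1 i'
    | inr i' => exact hp.1.2 i'
  rw [Finset.card_eq_sum_card_fiberwise hmem]
  push_cast
  have hfiber : ∀ a ∈ A,
      (((((pis (m+4) A) ×ˢ (pis (m+4) A)).filter fun p =>
        (∑ t, p.1 t = ∑ t, p.2 t) ∧ Sum.elim p.1 p.2 i = Sum.elim p.1 p.2 j).filter
          fun p => Sum.elim p.1 p.2 i = a).card : ℝ)
      ≤ Real.sqrt ((Tk (m+2) A : ℝ) * (Tk (m+4) A : ℝ)) := by
    intro a _
    have hhp : ∀ p ∈ (((pis (m+4) A) ×ˢ (pis (m+4) A)).filter fun p =>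
        (∑ t, p.1 t = ∑ t, p.2 t) ∧ Sum.elim p.1 p.2 i = Sum.elim p.1 p.2 j).filter
          (fun p => Sum.elim p.1 p.2 i = a),
        p.1 ∈ pis (m+4) A ∧ p.2 ∈ pis (m+4) A ∧ (∑ t, p.1 t = ∑ t, p.2 t) ∧
          Sum.elim p.1 p.2 i = Sum.elim p.1 p.2 j ∧ Sum.elim p.1 p.2 i = a := by
      intro p hp
      rw [Finset.mem_filter, Finset.mem_filter, Finset.mem_product] at hp
      exact ⟨hp.1.1.1, hp.1.1.2, hp.1.2.1, hp.1.2.2, hp.2⟩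
    cases i with
    | inl i' =>
      cases j with
      | inl j' =>
        have hne : i' ≠ j' := fun h => hij (by rw [h])
        refine le_trans ?_ (NS_sqrt_same A m (a + a))
        have := case_same A m a i' j' hne _ (fun p hp => by
          obtain ⟨h1, h2, h3, h4, h5⟩ := hhp p hp
          exact ⟨h1, h2, h3, h4, h5⟩)
        exact_mod_cast this
      | inr j'' =>
        refine le_trans ?_ (NS_sqrt_mixed A m)
        have := case_mixed A m a i' j'' _ (fun p hp => by
          obtain ⟨h1, h2, h3, h4, h5⟩ := hhp p hp
          exact ⟨h1, h2, h3, h4, h5⟩)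
        exact_mod_cast this
    | inr i' =>
      cases j with
      | inl j'' =>
        refine le_trans ?_ (NS_sqrt_mixed A m)
        have := case_mixed A m a j'' i' _ (fun p hp => by
          obtain ⟨h1, h2, h3, h4, h5⟩ := hhp p hp
          exact ⟨h1, h2, h3, h4.symm, h4.symm.trans h5⟩)
        exact_mod_cast this
      | inr j' =>
        have hne : i' ≠ j' := fun h => hij (by rw [h])
        refine le_trans ?_ (NS_sqrt_same A m (a + a))
        have := case_same2 A m a i' j' hne _ (fun p hp => by
          obtain ⟨h1, h2, h3, h4, h5⟩ := hhp p hp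
          exact ⟨h1, h2, h3, h4, h5⟩)
        exact_mod_cast this
  calc ∑ a ∈ A, ((((((pis (m+4) A) ×ˢ (pis (m+4) A)).filter fun p =>
        (∑ t, p.1 t = ∑ t, p.2 t) ∧ Sum.elim p.1 p.2 i = Sum.elim p.1 p.2 j).filter
          fun p => Sum.elim p.1 p.2 i = a).card : ℝ))
      ≤ ∑ _a ∈ A, Real.sqrt ((Tk (m+2) A : ℝ) * (Tk (m+4) A : ℝ)) :=
        Finset.sum_le_sum hfiber
    _ = A.card * Real.sqrt ((Tk (m+2) A : ℝ) * (Tk (m+4) A : ℝ)) := by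
        rw [Finset.sum_const, nsmul_eq_mul]

lemma Tk_pos (k : ℕ) (hA : A.Nonempty) : 0 < Tk k A := by
  obtain ⟨a, ha⟩ := hA
  rw [Tk]
  refine Finset.card_pos.2 ⟨((fun _ => a), (fun _ => a)), ?_⟩
  rw [Finset.mem_filter, Finset.mem_product]
  exact ⟨⟨Fintype.mem_piFinset.2 fun _ => ha, Fintype.mem_piFinset.2 fun _ => ha⟩, rfl⟩

lemma Tk_one_le : Tk 1 A ≤ A.card := by
  rw [Tk]
  refine Finset.card_le_card_of_injOn (fun p => p.1 0) ?_ ?_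
  · intro p hp
    rw [Finset.mem_coe, Finset.mem_filter, Finset.mem_product, Fintype.mem_piFinset] at hp
    exact hp.1.1 0
  · intro p hp q hq heq
    rw [Finset.coe_filter, Set.mem_setOf_eq, Finset.mem_product] at hp hq
    have h1 : p.1 = q.1 := funext fun i => by rw [Subsingleton.elim i 0]; exact heq
    have hp2 : p.2 0 = p.1 0 := by
      have := hp.2; rw [Fin.sum_univ_one, Fin.sum_univ_one] at this; exact this.symm
    have hq2 : q.2 0 = q.1 0 := by
      have := hq.2; rw [Fin.sum_univ_one, Fin.sum_univ_one] at this; exact this.symm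
    have h2 : p.2 = q.2 := funext fun i => by
      rw [Subsingleton.elim i 0, hp2, hq2, h1]
    exact Prod.ext h1 h2

lemma Tk_split (m : ℕ) : Tk (m+4) A = TkStar (m+4) A +
    (((pis (m+4) A) ×ˢ (pis (m+4) A)).filter fun p =>
      (∑ t, p.1 t = ∑ t, p.2 t) ∧ ¬ ∀ i j : Fin (m+4) ⊕ Fin (m+4),
        Sum.elim p.1 p.2 i = Sum.elim p.1 p.2 j → i = j).card := by
  rw [Tk, TkStar]
  simp only [pis]
  have h := Finset.card_filter_add_card_filter_not
    (s := ((Fintype.piFinset fun _ : Fin (m+4) => A) ×ˢ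
      (Fintype.piFinset fun _ : Fin (m+4) => A)).filter fun p => ∑ t, p.1 t = ∑ t, p.2 t)
    (p := fun p => ∀ i j : Fin (m+4) ⊕ Fin (m+4),
      Sum.elim p.1 p.2 i = Sum.elim p.1 p.2 j → i = j)
  rw [Finset.filter_filter, Finset.filter_filter] at h
  omega

lemma bad_le (m : ℕ) :
    ((((pis (m+4) A) ×ˢ (pis (m+4) A)).filter fun p =>
      (∑ t, p.1 t = ∑ t, p.2 t) ∧ ¬ ∀ i j : Fin (m+4) ⊕ Fin (m+4),
        Sum.elim p.1 p.2 i = Sum.elim p.1 p.2 j → i = j).card : ℝ)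
    ≤ (2*(m+4)) * (2*(m+4)) *
        ((A.card : ℝ) * Real.sqrt ((Tk (m+2) A : ℝ) * (Tk (m+4) A : ℝ))) := by
  classical
  set I := Fin (m+4) ⊕ Fin (m+4)
  have hsub : (((pis (m+4) A) ×ˢ (pis (m+4) A)).filter fun p =>
      (∑ t, p.1 t = ∑ t, p.2 t) ∧ ¬ ∀ i j : I,
        Sum.elim p.1 p.2 i = Sum.elim p.1 p.2 j → i = j)
      ⊆ (Finset.univ : Finset I).offDiag.biUnion fun ij =>
        ((pis (m+4) A) ×ˢ (pis (m+4) A)).filter fun p =>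
          (∑ t, p.1 t = ∑ t, p.2 t) ∧ Sum.elim p.1 p.2 ij.1 = Sum.elim p.1 p.2 ij.2 := by
    intro p hp
    rw [Finset.mem_filter] at hp
    obtain ⟨hmem, hsum, hninj⟩ := hp
    push_neg at hninj
    obtain ⟨i, j, heq, hne⟩ := hninj
    refine Finset.mem_biUnion.2 ⟨(i, j), ?_, ?_⟩
    · exact Finset.mem_offDiag.2 ⟨Finset.mem_univ _, Finset.mem_univ _, hne⟩
    · exact Finset.mem_filter.2 ⟨hmem, hsum, heq⟩
  calc ((((pis (m+4) A) ×ˢ (pis (m+4) A)).filter fun p =>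
      (∑ t, p.1 t = ∑ t, p.2 t) ∧ ¬ ∀ i j : I,
        Sum.elim p.1 p.2 i = Sum.elim p.1 p.2 j → i = j).card : ℝ)
      ≤ (((Finset.univ : Finset I).offDiag.biUnion fun ij =>
        ((pis (m+4) A) ×ˢ (pis (m+4) A)).filter fun p =>
          (∑ t, p.1 t = ∑ t, p.2 t) ∧ Sum.elim p.1 p.2 ij.1 = Sum.elim p.1 p.2 ij.2).card : ℝ) := by
        exact_mod_cast Finset.card_le_card hsub
    _ ≤ ∑ ij ∈ (Finset.univ : Finset I).offDiag,
          ((((pis (m+4) A) ×ˢ (pis (m+4) A)).filter fun p =>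
            (∑ t, p.1 t = ∑ t, p.2 t) ∧
              Sum.elim p.1 p.2 ij.1 = Sum.elim p.1 p.2 ij.2).card : ℝ) := by
        exact_mod_cast Finset.card_biUnion_le
    _ ≤ ∑ _ij ∈ (Finset.univ : Finset I).offDiag,
          ((A.card : ℝ) * Real.sqrt ((Tk (m+2) A : ℝ) * (Tk (m+4) A : ℝ))) := by
        refine Finset.sum_le_sum fun ij hij => ?_
        have hne : ij.1 ≠ ij.2 := (Finset.mem_offDiag.1 hij).2.2
        exact Bd_le A m ij.1 ij.2 hne
    _ ≤ (2*(m+4)) * (2*(m+4)) *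
          ((A.card : ℝ) * Real.sqrt ((Tk (m+2) A : ℝ) * (Tk (m+4) A : ℝ))) := by
        rw [Finset.sum_const, nsmul_eq_mul]
        have hcard : ((Finset.univ : Finset I).offDiag.card : ℝ)
            ≤ (2*(m+4)) * (2*(m+4)) := by
          rw [Finset.offDiag_card]
          have : (Finset.univ : Finset I).card = 2 * (m+4) := by
            simp [I, Fintype.card_sum]
            omega
          rw [this]
          calc ((2*(m+4) * (2*(m+4)) - 2*(m+4) : ℕ) : ℝ)
              ≤ ((2*(m+4) * (2*(m+4)) : ℕ) : ℝ) := by exact_mod_cast Nat.sub_le _ _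
            _ = (2*(m+4) : ℝ) * (2*(m+4)) := by push_cast; ring
        have hnn : (0:ℝ) ≤ (A.card : ℝ) * Real.sqrt ((Tk (m+2) A : ℝ) * (Tk (m+4) A : ℝ)) :=
          mul_nonneg (Nat.cast_nonneg _) (Real.sqrt_nonneg _)
        exact mul_le_mul_of_nonneg_right hcard hnn

end Stmt14

/-- If `s ≥ 4` and `T_s(A) ≥ C · 10^s s^{2s} |A|^s` for a suitable absolute constant `C`,
then `T*_s(A) ≥ (1/2) T_s(A)`. -/
theorem stmt14 :
    ∃ C : ℝ, 0 < C ∧ ∀ (G : Type*) [AddCommGroup G] [DecidableEq G]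
      (A : Finset G) (s : ℕ), 4 ≤ s →
      C * 10 ^ s * (s : ℝ) ^ (2 * s) * (A.card : ℝ) ^ s ≤ (Tk s A : ℝ) →
      (Tk s A : ℝ) ≤ 2 * (TkStar s A : ℝ) := by
  refine ⟨1, one_pos, ?_⟩
  intro G _ _ A s hs hT
  obtain ⟨m, rfl⟩ : ∃ m, s = m + 4 := ⟨s - 4, by omega⟩
  by_cases hA : A.Nonempty
  swap
  · -- A empty
    have hA' : A = ∅ := Finset.not_nonempty_iff_eq_empty.1 hA
    subst hA'
    have h0 : Tk (m+4) (∅ : Finset G) = 0 := by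
      rw [Tk]
      have he : (Fintype.piFinset fun _ : Fin (m+4) => (∅ : Finset G)) = ∅ := by
        ext f
        simp only [Fintype.mem_piFinset, Finset.notMem_empty, iff_false]
        intro h
        exact (h 0)
      rw [he]
      simp
    rw [h0]
    push_cast
    positivity
  · -- A nonempty
    obtain ⟨a, ha⟩ : ∃ x : ℝ, ((A.card : ℕ) : ℝ) = x := ⟨_, rfl⟩
    obtain ⟨T2, hT2⟩ : ∃ x : ℝ, ((Tk (m+2) A : ℕ) : ℝ) = x := ⟨_, rfl⟩
    obtain ⟨T4, hT4⟩ : ∃ x : ℝ, ((Tk (m+4) A : ℕ) : ℝ) = x := ⟨_, rfl⟩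
    obtain ⟨s', hs'⟩ : ∃ x : ℝ, ((m:ℝ) + 4) = x := ⟨_, rfl⟩
    have ha1 : (1:ℝ) ≤ a := by
      rw [← ha]
      exact_mod_cast Nat.one_le_iff_ne_zero.2 (Finset.card_ne_zero_of_mem hA.choose_spec)
    have hs'1 : (1:ℝ) ≤ s' := by
      rw [← hs']
      have := Nat.cast_nonneg (α := ℝ) m
      linarith
    have hT4pos : (0:ℝ) < T4 := by
      rw [← hT4]
      exact_mod_cast Stmt14.Tk_pos A (m+4) hA
    have hT2nn : (0:ℝ) ≤ T2 := by rw [← hT2]; positivity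
    have hchain := Stmt14.chain_ineq (fun k => (Tk k A : ℝ)) m
      (fun k _ => by
        show (0:ℝ) < (Tk k A : ℝ)
        exact_mod_cast Stmt14.Tk_pos A k hA)
      (fun k _ => Stmt14.logconv A k)
    have hchain2 : T2^(m+3) ≤ a^2 * T4^(m+1) := by
      rw [← hT2, ← hT4, ← ha]
      refine le_trans hchain ?_
      have ht1 : ((Tk 1 A : ℝ)) ≤ ((A.card : ℕ) : ℝ) := by
        exact_mod_cast Stmt14.Tk_one_le A
      have h1 : ((Tk 1 A : ℝ))^2 ≤ ((A.card : ℕ) : ℝ)^2 :=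
        pow_le_pow_left₀ (Nat.cast_nonneg _) ht1 2
      exact mul_le_mul_of_nonneg_right h1 (pow_nonneg (Nat.cast_nonneg _) _)
    have hTlow : 10^(m+4) * s'^(2*(m+4)) * a^(m+4) ≤ T4 := by
      rw [one_mul] at hT
      have hc : ((m+4 : ℕ) : ℝ) = (m:ℝ) + 4 := by push_cast; ring
      rw [hc, hs', ha, hT4] at hT
      exact hT
    have hTlownn : (0:ℝ) ≤ 10^(m+4) * s'^(2*(m+4)) * a^(m+4) := by
      have hsp : (0:ℝ) < s' := by linarith
      have hap : (0:ℝ) < a := by linarith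
      positivity
    have hsplit : T4 = (TkStar (m+4) A : ℝ) +
        ((((Stmt14.pis (m+4) A) ×ˢ (Stmt14.pis (m+4) A)).filter fun p =>
          (∑ t, p.1 t = ∑ t, p.2 t) ∧ ¬ ∀ i j : Fin (m+4) ⊕ Fin (m+4),
            Sum.elim p.1 p.2 i = Sum.elim p.1 p.2 j → i = j).card : ℝ) := by
      rw [← hT4]
      exact_mod_cast Stmt14.Tk_split A m
    have hbad := Stmt14.bad_le A m
    have hfold : (2*((m:ℝ)+4)) * (2*((m:ℝ)+4)) *
        ((A.card : ℝ) * Real.sqrt ((Tk (m+2) A : ℝ) * (Tk (m+4) A : ℝ)))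
        = (1/2) * (8 * s'^2 * a * Real.sqrt (T2 * T4)) := by
      rw [← hs', ← ha, ← hT2, ← hT4]
      ring
    rw [hfold] at hbad
    rw [hT4]
    -- key inequality : 64 s'^4 a^2 T2 ≤ T4
    have hKey : 64 * s'^4 * a^2 * T2 ≤ T4 := by
      have hC : (64 * s'^4 * a^2)^(m+3) * a^2 ≤ T4^2 := by
        have e1 : (64 * s'^4 * a^2)^(m+3) * a^2
            = (64:ℝ)^(m+3) * (s'^4)^(m+3) * ((a^2)^(m+3) * a^2) := by ring
        have e2 : ((s':ℝ)^4)^(m+3) = s'^(4*(m+3)) := by rw [← pow_mul]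
        have e3 : ((a:ℝ)^2)^(m+3) * a^2 = a^(2*(m+4)) := by
          rw [← pow_mul, ← pow_add]
          congr 1
          try omega
        have h1 : (64:ℝ)^(m+3) ≤ ((10:ℝ)^(m+4))^2 := by
          calc (64:ℝ)^(m+3) ≤ (100:ℝ)^(m+3) :=
                pow_le_pow_left₀ (by norm_num) (by norm_num) _
            _ ≤ (100:ℝ)^(m+4) := pow_le_pow_right₀ (by norm_num) (by omega)
            _ = ((10:ℝ)^(m+4))^2 := by
                rw [show (100:ℝ) = 10^2 by norm_num, ← pow_mul, ← pow_mul]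
                congr 1
                omega
        have h2 : (s':ℝ)^(4*(m+3)) ≤ (s'^(2*(m+4)))^2 := by
          rw [← pow_mul]
          exact pow_le_pow_right₀ hs'1 (by omega)
        have h3 : ((a:ℝ)^(m+4))^2 = a^(2*(m+4)) := by
          rw [← pow_mul]
          congr 1
          omega
        have hsq : (10^(m+4) * s'^(2*(m+4)) * a^(m+4))^2 ≤ T4^2 :=
          pow_le_pow_left₀ hTlownn hTlow 2
        have e4 : (10^(m+4) * s'^(2*(m+4)) * a^(m+4) : ℝ)^2
            = ((10:ℝ)^(m+4))^2 * ((s')^(2*(m+4)))^2 * ((a)^(m+4))^2 := by ring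
        rw [e1, e2, e3]
        calc (64:ℝ)^(m+3) * s'^(4*(m+3)) * a^(2*(m+4))
            ≤ ((10:ℝ)^(m+4))^2 * ((s')^(2*(m+4)))^2 * a^(2*(m+4)) := by
              refine mul_le_mul_of_nonneg_right ?_ (by positivity)
              exact mul_le_mul h1 h2 (by positivity) (by positivity)
          _ = ((10:ℝ)^(m+4))^2 * ((s')^(2*(m+4)))^2 * ((a)^(m+4))^2 := by rw [h3]
          _ = (10^(m+4) * s'^(2*(m+4)) * a^(m+4) : ℝ)^2 := by ring
          _ ≤ T4^2 := hsq
      refine le_of_pow_le_pow_left₀ (n := m+3) (by omega) hT4pos.le ?_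
      calc (64 * s'^4 * a^2 * T2)^(m+3)
          = (64 * s'^4 * a^2)^(m+3) * T2^(m+3) := by rw [mul_pow]
        _ ≤ (64 * s'^4 * a^2)^(m+3) * (a^2 * T4^(m+1)) := by
            refine mul_le_mul_of_nonneg_left hchain2 (by positivity)
        _ = ((64 * s'^4 * a^2)^(m+3) * a^2) * T4^(m+1) := by ring
        _ ≤ T4^2 * T4^(m+1) :=
            mul_le_mul_of_nonneg_right hC (pow_nonneg hT4pos.le _)
        _ = T4^(m+3) := by
            rw [← pow_add]
            congr 1
            omega
    -- from key inequality to the sqrt bound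
    have hsqrt : 8 * s'^2 * a * Real.sqrt (T2 * T4) ≤ T4 := by
      have hnnl : (0:ℝ) ≤ 8 * s'^2 * a * Real.sqrt (T2 * T4) := by positivity
      refine le_of_pow_le_pow_left₀ (n := 2) (by omega) hT4pos.le ?_
      have hx : (Real.sqrt (T2 * T4))^2 = T2 * T4 :=
        Real.sq_sqrt (by positivity)
      calc (8 * s'^2 * a * Real.sqrt (T2 * T4))^2
          = 64 * s'^4 * a^2 * ((Real.sqrt (T2 * T4))^2) := by ring
        _ = (64 * s'^4 * a^2 * T2) * T4 := by rw [hx]; ring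
        _ ≤ T4 * T4 := mul_le_mul_of_nonneg_right hKey hT4pos.le
        _ = T4^2 := by ring
    have hstar : (0:ℝ) ≤ (TkStar (m+4) A : ℝ) := Nat.cast_nonneg _
    linarith [hbad, hsqrt, hsplit]
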